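/- (Variational derivative formula.) For all L ∈ F and all φ ∈ F^{A′}: ⟨j*(∂L), φ⟩ − ev_{jφ}(L) ∈ Div F^M, where ∂L = (∂_a L)_{a∈A} (finitely supported) and ev_{jφ}(L) = Σ_a (jφ)^a·∂_a L. -/

import Mathlib

noncomputable section

variable {𝔽 : Type*} [Field 𝔽] {F : Type*} [CommRing F] [Algebra 𝔽 F] {m : ℕ}
  {A A' : Type*}

/-- Membership in the space of divergences `Div F^M = {Σ_μ D_μ ψ^μ}`. -/
def IsDiv (D : Fin m → Derivation 𝔽 F F) (f : F) : Prop :=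
  ∃ ψ : Fin m → F, f = ∑ μ, D μ (ψ μ)

/-- The evolutionary differentiation `ev_φ f = Σ_a φ^a · ∂_a f` (a finite sum). -/
def ev (pa : A → Derivation 𝔽 F F) (φ : A → F) (f : F) : F :=
  ∑ᶠ a, φ a * pa a f

/-- `(∇φ)^a_μ = D_μ φ^a + Σ_b Γ^a_{μb} · φ^b`; here `Γ b μ a` denotes `Γ^b_{μa}`. -/
def nabla (D : Fin m → Derivation 𝔽 F F) (Γ : A → Fin m → A → F)
    (φ : A → F) (a : A) (μ : Fin m) : F :=
  D μ (φ a) + ∑ᶠ b, Γ a μ b * φ b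

/-- `(∇*χ)_a = -Σ_μ D_μ χ^μ_a + Σ_{μ,b} Γ^b_{μa} · χ^μ_b`. -/
def nablaStar (D : Fin m → Derivation 𝔽 F F) (Γ : A → Fin m → A → F)
    (χ : Fin m → A → F) (a : A) : F :=
  -∑ μ, D μ (χ μ a) + ∑ᶠ b, ∑ μ, Γ b μ a * χ μ b

/-- The pairing `⟨f, φ⟩ = Σ_a f_a · φ^a`. -/
def pair (f φ : A → F) : F := ∑ᶠ a, f a * φ a

/-- `D^i = D_1^{i^1} ∘ ⋯ ∘ D_m^{i^m}`. -/
def Dpow (D : Fin m → Derivation 𝔽 F F) (i : Fin m → ℕ) : F → F :=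
  (List.finRange m).foldr (fun μ g => (⇑(D μ))^[i μ] ∘ g) id

/-- `|i| = i^1 + ⋯ + i^m`. -/
def msize {m : ℕ} (i : Fin m → ℕ) : ℕ := ∑ μ, i μ

/-- The differential operator `P(D)L = Σ_i P_i · D^i L`. -/
def applyP (D : Fin m → Derivation 𝔽 F F) (P : (Fin m → ℕ) → F) (L : F) : F :=
  ∑ᶠ i, P i * Dpow D i L

/-- The Lagrange dual operator `P*(D)K = Σ_i (-1)^{|i|} D^i (P_i · K)`. -/
def applyPstar (D : Fin m → Derivation 𝔽 F F) (P : (Fin m → ℕ) → F) (K : F) : F :=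
  ∑ᶠ i, (-1 : F) ^ msize i * Dpow D i (P i * K)

/-- The jet map `(jφ)^a = Σ_{i,α} j^a_{iα} · D^i φ^α`; here `jc a i α` denotes `j^a_{iα}`. -/
def jmap (D : Fin m → Derivation 𝔽 F F) (jc : A → (Fin m → ℕ) → A' → F)
    (φ : A' → F) (a : A) : F :=
  ∑ᶠ i, ∑ᶠ α, jc a i α * Dpow D i (φ α)

/-- The Lagrange dual `(j*f)_α = Σ_{a,i} (-1)^{|i|} D^i (j^a_{iα} · f_a)`. -/
def jstar (D : Fin m → Derivation 𝔽 F F) (jc : A → (Fin m → ℕ) → A' → F)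
    (f : A → F) (α : A') : F :=
  ∑ᶠ a, ∑ᶠ i, (-1 : F) ^ msize i * Dpow D i (jc a i α * f a)

/-- `(Λf)^α = Σ_{β,i} Λ^{αβ}_i · D^i f_β`; here `Λc α β i` denotes `Λ^{αβ}_i`. -/
def Lam (D : Fin m → Derivation 𝔽 F F) (Λc : A' → A' → (Fin m → ℕ) → F)
    (f : A' → F) (α : A') : F :=
  ∑ᶠ β, ∑ᶠ i, Λc α β i * Dpow D i (f β)

/-- The Lagrange dual `(Λ*f)^α = Σ_{β,i} (-1)^{|i|} D^i (Λ^{βα}_i · f_β)`. -/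
def LamStar (D : Fin m → Derivation 𝔽 F F) (Λc : A' → A' → (Fin m → ℕ) → F)
    (f : A' → F) (α : A') : F :=
  ∑ᶠ β, ∑ᶠ i, (-1 : F) ^ msize i * Dpow D i (Λc β α i * f β)

/-- The variational derivative `δR = j*(∂R)`, where `∂R = (∂_a R)`. -/
def vard (D : Fin m → Derivation 𝔽 F F) (pa : A → Derivation 𝔽 F F)
    (jc : A → (Fin m → ℕ) → A' → F) (R : F) : A' → F :=
  jstar D jc (fun a => pa a R)

/-- The Hamiltonian vector `φ(R) = j(Λ(δR))`. -/
def hamv (D : Fin m → Derivation 𝔽 F F) (pa : A → Derivation 𝔽 F F)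
    (jc : A → (Fin m → ℕ) → A' → F) (Λc : A' → A' → (Fin m → ℕ) → F) (R : F) : A → F :=
  jmap D jc (Lam D Λc (vard D pa jc R))

/-- The commutator `[ev_ψ, Λ]`, acting with coefficients `ev_ψ(Λ^{αβ}_i)`. -/
def evLam (D : Fin m → Derivation 𝔽 F F) (pa : A → Derivation 𝔽 F F)
    (Λc : A' → A' → (Fin m → ℕ) → F) (ψ : A → F) (f : A' → F) (α : A') : F :=
  ∑ᶠ β, ∑ᶠ i, ev pa ψ (Λc α β i) * Dpow D i (f β)

/-! ### Auxiliary lemmas for stmt_11 -/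

/-- Composition of single derivations along a list. -/
def DLaux (D : Fin m → Derivation 𝔽 F F) : List (Fin m) → F → F
  | [] => id
  | μ :: l => ⇑(D μ) ∘ DLaux D l

lemma DLaux_append (D : Fin m → Derivation 𝔽 F F) (l₁ l₂ : List (Fin m)) :
    DLaux D (l₁ ++ l₂) = DLaux D l₁ ∘ DLaux D l₂ := by
  induction l₁ with
  | nil => rfl
  | cons μ l ih => simp [DLaux, ih, Function.comp_assoc]

lemma DLaux_replicate (D : Fin m → Derivation 𝔽 F F) (μ : Fin m) (n : ℕ) :
    DLaux D (List.replicate n μ) = (⇑(D μ))^[n] := by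
  induction n with
  | zero => rfl
  | succ n ih =>
      rw [List.replicate_succ]
      simp only [DLaux, ih]
      exact (Function.iterate_succ' _ n).symm

lemma Dpow_eq_DLaux (D : Fin m → Derivation 𝔽 F F) (i : Fin m → ℕ) :
    Dpow D i = DLaux D ((List.finRange m).flatMap fun μ => List.replicate (i μ) μ) := by
  rw [Dpow]
  generalize (List.finRange m) = L
  induction L with
  | nil => rfl
  | cons μ L ih =>
      rw [List.flatMap_cons, DLaux_append, List.foldr_cons, ih, DLaux_replicate]

lemma msize_eq_length (i : Fin m → ℕ) :
    msize i = ((List.finRange m).flatMap fun μ => List.replicate (i μ) μ).length := by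
  rw [List.length_flatMap, msize, Fin.sum_univ_def]
  congr 1
  simp [Function.comp_def]

lemma DLaux_zero (D : Fin m → Derivation 𝔽 F F) (l : List (Fin m)) :
    DLaux D l 0 = 0 := by
  induction l with
  | nil => rfl
  | cons μ l ih => simp [DLaux, ih]

lemma Dpow_zero' (D : Fin m → Derivation 𝔽 F F) (i : Fin m → ℕ) :
    Dpow D i 0 = 0 := by
  rw [Dpow_eq_DLaux]; exact DLaux_zero D _

lemma DLaux_comm (D : Fin m → Derivation 𝔽 F F)
    (hDcomm : ∀ μ ν (f : F), D μ (D ν f) = D ν (D μ f))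
    (l : List (Fin m)) (μ : Fin m) (f : F) :
    DLaux D l (D μ f) = D μ (DLaux D l f) := by
  induction l with
  | nil => rfl
  | cons ν l ih => simp only [DLaux, Function.comp_apply, ih, hDcomm]

lemma isDiv_zero (D : Fin m → Derivation 𝔽 F F) : IsDiv D (0 : F) :=
  ⟨0, by simp⟩

lemma isDiv_add {D : Fin m → Derivation 𝔽 F F} {f g : F}
    (hf : IsDiv D f) (hg : IsDiv D g) : IsDiv D (f + g) := by
  obtain ⟨ψ, hψ⟩ := hf
  obtain ⟨χ, hχ⟩ := hg
  exact ⟨ψ + χ, by simp [hψ, hχ, Finset.sum_add_distrib]⟩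

lemma isDiv_neg {D : Fin m → Derivation 𝔽 F F} {f : F}
    (hf : IsDiv D f) : IsDiv D (-f) := by
  obtain ⟨ψ, hψ⟩ := hf
  exact ⟨-ψ, by simp [hψ, Finset.sum_neg_distrib]⟩

lemma isDiv_sum {D : Fin m → Derivation 𝔽 F F} {ι : Type*} (s : Finset ι) (f : ι → F)
    (h : ∀ x ∈ s, IsDiv D (f x)) : IsDiv D (∑ x ∈ s, f x) := by
  classical
  induction s using Finset.induction_on with
  | empty => simpa using isDiv_zero D
  | insert _ _ hx ih =>
      rw [Finset.sum_insert hx]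
      exact isDiv_add (h _ (Finset.mem_insert_self _ _))
        (ih fun x hxs => h x (Finset.mem_insert_of_mem hxs))

lemma isDiv_single (D : Fin m → Derivation 𝔽 F F) (μ : Fin m) (g : F) :
    IsDiv D (D μ g) := by
  classical
  refine ⟨fun ν => if ν = μ then g else 0, ?_⟩
  rw [Finset.sum_eq_single μ]
  · simp
  · intro ν _ hν; simp [hν]
  · simp

lemma isDiv_neg_one_pow_mul {D : Fin m → Derivation 𝔽 F F} (n : ℕ) {f : F}
    (hf : IsDiv D f) : IsDiv D ((-1 : F) ^ n * f) := by
  rcases Nat.even_or_odd n with h | h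
  · rw [h.neg_one_pow, one_mul]; exact hf
  · rw [h.neg_one_pow, neg_one_mul]; exact isDiv_neg hf

lemma ibp_list (D : Fin m → Derivation 𝔽 F F)
    (hDcomm : ∀ μ ν (f : F), D μ (D ν f) = D ν (D μ f))
    (l : List (Fin m)) (u v : F) :
    IsDiv D ((-1 : F) ^ l.length * DLaux D l u * v - u * DLaux D l v) := by
  induction l generalizing v with
  | nil => simp only [List.length_nil, pow_zero, one_mul, DLaux, id]; simpa using isDiv_zero D
  | cons μ l ih =>
      have hL : (D μ) (DLaux D l u * v)
          = D μ (DLaux D l u) * v + DLaux D l u * D μ v := by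
        simpa [mul_comm] using (D μ).leibniz (DLaux D l u) v
      have key : (-1 : F) ^ (μ :: l).length * DLaux D (μ :: l) u * v
            - u * DLaux D (μ :: l) v
          = (-1 : F) ^ (l.length + 1) * (D μ (DLaux D l u * v))
            + ((-1 : F) ^ l.length * DLaux D l u * (D μ v)
              - u * DLaux D l (D μ v)) := by
        simp only [DLaux, Function.comp_apply, List.length_cons,
          DLaux_comm D hDcomm l μ v, hL]
        ring
      rw [key]
      exact isDiv_add (isDiv_neg_one_pow_mul _ (isDiv_single D μ _)) (ih (D μ v))

lemma ibp (D : Fin m → Derivation 𝔽 F F)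
    (hDcomm : ∀ μ ν (f : F), D μ (D ν f) = D ν (D μ f))
    (i : Fin m → ℕ) (u v : F) :
    IsDiv D ((-1 : F) ^ msize i * Dpow D i u * v - u * Dpow D i v) := by
  rw [Dpow_eq_DLaux, msize_eq_length]
  exact ibp_list D hDcomm _ u v

/-- variational derivative formula:
`⟨j*(∂L), φ⟩ - ev_{jφ}(L) ∈ Div F^M` for all `L ∈ F`, `φ ∈ F^{A'}`. -/
theorem stmt_11
    {𝔽 : Type*} [Field 𝔽] [CharZero 𝔽] {F : Type*} [CommRing F] [Algebra 𝔽 F]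
    {m : ℕ} {A A' : Type*}
    (D : Fin m → Derivation 𝔽 F F)
    (hDcomm : ∀ μ ν (f : F), D μ (D ν f) = D ν (D μ f))
    (pa : A → Derivation 𝔽 F F)
    (hpacomm : ∀ a b (f : F), pa a (pa b f) = pa b (pa a f))
    (hpafin : ∀ f : F, {a : A | pa a f ≠ 0}.Finite)
    (jc : A → (Fin m → ℕ) → A' → F)
    (hjfin : ∀ a : A, {p : (Fin m → ℕ) × A' | jc a p.1 p.2 ≠ 0}.Finite)
    (L : F) (φ : A' → F) :
    IsDiv D (pair (jstar D jc (fun a => pa a L)) φ - ev pa (jmap D jc φ) L) := by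
  classical
  set S : Finset A := (hpafin L).toFinset with hS
  set T : A → Finset ((Fin m → ℕ) × A') := fun a => (hjfin a).toFinset with hT
  set Ia : A → Finset (Fin m → ℕ) := fun a => (T a).image Prod.fst with hIa
  set Ja : A → Finset A' := fun a => (T a).image Prod.snd with hJa
  set W : Finset A' := S.biUnion Ja with hW
  have hjc : ∀ a i α, (i, α) ∉ T a → jc a i α = 0 := by
    intro a i α h
    by_contra hne
    exact h ((hjfin a).mem_toFinset.2 hne)
  have hpaS : ∀ a, a ∉ S → pa a L = 0 := by
    intro a h
    by_contra hne
    exact h ((hpafin L).mem_toFinset.2 hne)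
  have hIaJa : ∀ a i α, i ∈ Ia a → α ∉ Ja a → jc a i α = 0 := by
    intro a i α _ hα
    refine hjc a i α fun hmem => hα ?_
    exact Finset.mem_image.2 ⟨(i, α), hmem, rfl⟩
  have hnotIa : ∀ a i, i ∉ Ia a → ∀ α, jc a i α = 0 := by
    intro a i hi α
    refine hjc a i α fun hmem => hi ?_
    exact Finset.mem_image.2 ⟨(i, α), hmem, rfl⟩
  have hnotW : ∀ α, α ∉ W → ∀ a ∈ S, ∀ i, jc a i α = 0 := by
    intro α hα a ha i
    refine hjc a i α fun hmem => hα ?_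
    exact Finset.mem_biUnion.2 ⟨a, ha, Finset.mem_image.2 ⟨(i, α), hmem, rfl⟩⟩
  -- Step A: jstar as a finite sum
  have hjstar : ∀ α, jstar D jc (fun a => pa a L) α
      = ∑ a ∈ S, ∑ i ∈ Ia a, (-1 : F) ^ msize i * Dpow D i (jc a i α * pa a L) := by
    intro α
    rw [jstar, finsum_eq_finset_sum_of_support_subset _ (s := S) ?_]
    · refine Finset.sum_congr rfl fun a _ => ?_
      refine finsum_eq_finset_sum_of_support_subset _ ?_
      intro i hi
      simp only [Function.mem_support] at hi
      by_contra hiIa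
      rw [hnotIa a i hiIa α, zero_mul, Dpow_zero', mul_zero] at hi
      exact hi rfl
    · intro a ha
      simp only [Function.mem_support] at ha
      by_contra haS
      rw [show (∑ᶠ i, (-1 : F) ^ msize i * Dpow D i (jc a i α * pa a L)) = 0 from ?_] at ha
      · exact ha rfl
      · have : ∀ i : Fin m → ℕ, (-1 : F) ^ msize i * Dpow D i (jc a i α * pa a L) = 0 := by
          intro i; rw [hpaS a haS, mul_zero, Dpow_zero', mul_zero]
        simp only [this, finsum_zero]
  -- Step B: pair as a triple finite sum
  have hpair : pair (jstar D jc (fun a => pa a L)) φ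
      = ∑ a ∈ S, ∑ i ∈ Ia a, ∑ α ∈ W,
          ((-1 : F) ^ msize i * Dpow D i (jc a i α * pa a L)) * φ α := by
    rw [pair, finsum_eq_finset_sum_of_support_subset _ (s := W) ?_]
    · simp_rw [hjstar, Finset.sum_mul]
      rw [Finset.sum_comm]
      exact Finset.sum_congr rfl fun a _ => Finset.sum_comm
    · intro α hα
      simp only [Function.mem_support] at hα
      by_contra hαW
      rw [hjstar α] at hα
      rw [show (∑ a ∈ S, ∑ i ∈ Ia a, (-1 : F) ^ msize i * Dpow D i (jc a i α * pa a L)) = 0 from ?_] at hα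
      · exact hα (by rw [zero_mul])
      · refine Finset.sum_eq_zero fun a ha => Finset.sum_eq_zero fun i _ => ?_
        rw [hnotW α hαW a ha i, zero_mul, Dpow_zero', mul_zero]
  -- Step C: ev as a triple finite sum
  have hev : ev pa (jmap D jc φ) L
      = ∑ a ∈ S, ∑ i ∈ Ia a, ∑ α ∈ W,
          (jc a i α * Dpow D i (φ α)) * pa a L := by
    rw [ev, finsum_eq_finset_sum_of_support_subset _ (s := S) ?_]
    · refine Finset.sum_congr rfl fun a ha => ?_
      rw [jmap, finsum_eq_finset_sum_of_support_subset _ (s := Ia a) ?_]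
      · rw [Finset.sum_mul]
        refine Finset.sum_congr rfl fun i hi => ?_
        rw [finsum_eq_finset_sum_of_support_subset _ (s := Ja a) ?_]
        · rw [Finset.sum_subset (Finset.subset_biUnion_of_mem Ja ha)
            (fun α _ hα => by rw [hIaJa a i α hi hα, zero_mul]), Finset.sum_mul]
        · intro α hα
          simp only [Function.mem_support] at hα
          by_contra hαJ
          rw [show jc a i α = 0 from ?_, zero_mul] at hα
          · exact hα rfl
          · refine hjc a i α fun hmem => hαJ (Finset.mem_image.2 ⟨(i, α), hmem, rfl⟩)
      · intro i hi
        simp only [Function.mem_support] at hi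
        by_contra hiIa
        rw [show (∑ᶠ α, jc a i α * Dpow D i (φ α)) = 0 from ?_] at hi
        · exact hi rfl
        · have : ∀ α : A', jc a i α * Dpow D i (φ α) = 0 := fun α => by
            rw [hnotIa a i hiIa α, zero_mul]
          simp only [this, finsum_zero]
    · intro a ha
      simp only [Function.mem_support] at ha
      by_contra haS
      rw [hpaS a haS, mul_zero] at ha
      exact ha rfl
  rw [hpair, hev, ← Finset.sum_sub_distrib]
  refine isDiv_sum _ _ fun a _ => ?_
  rw [← Finset.sum_sub_distrib]
  refine isDiv_sum _ _ fun i _ => ?_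
  rw [← Finset.sum_sub_distrib]
  refine isDiv_sum _ _ fun α _ => ?_
  have h := ibp D hDcomm i (jc a i α * pa a L) (φ α)
  have heq : (-1 : F) ^ msize i * Dpow D i (jc a i α * pa a L) * φ α
        - jc a i α * pa a L * Dpow D i (φ α)
      = (-1 : F) ^ msize i * Dpow D i (jc a i α * pa a L) * φ α
        - jc a i α * Dpow D i (φ α) * pa a L := by ring
  rw [heq] at h
  exact h
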